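/- For every ρ ∈ [0,1], the TS rate-energy region is contained in the SPS rate-energy region: for any α ∈ [0,1] there exists ρ ∈ [0,1] with ρζhP ≥ αζhP and log₂(1 + (1-ρ)hP/((1-ρ)σ_A² + σ_cov²)) ≥ (1-α)log₂(1 + hP/(σ_A²+σ_cov²)). -/
import Mathlib

/-- The TS rate-energy region is contained in the SPS region: for every `α ∈ [0,1]`
there exists `ρ ∈ [0,1]` harvesting at least as much energy and achieving at least
the TS rate. -/
theorem ts_subset_sps (h P sA scov ζ : ℝ) (hh : 0 < h) (hP : 0 < P)
    (hsA : 0 < sA) (hscov : 0 < scov) (hζ0 : 0 < ζ) (hζ1 : ζ ≤ 1)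
    (α : ℝ) (hα : α ∈ Set.Icc (0:ℝ) 1) :
    ∃ ρ ∈ Set.Icc (0:ℝ) 1, ρ * (ζ * h * P) ≥ α * (ζ * h * P) ∧
      Real.logb 2 (1 + (1 - ρ) * h * P / ((1 - ρ) * sA + scov)) ≥
        (1 - α) * Real.logb 2 (1 + h * P / (sA + scov)) := by
  obtain ⟨hα0, hα1⟩ := hα
  refine ⟨α, ⟨hα0, hα1⟩, le_refl _, ?_⟩
  set t : ℝ := 1 - α with ht
  have ht0 : 0 ≤ t := by simp [ht]; linarith
  have ht1 : t ≤ 1 := by simp [ht]; linarith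
  set x : ℝ := h * P / (sA + scov) with hx
  have hx0 : 0 < x := by positivity
  have hden : 0 < t * sA + scov := by positivity
  -- Bernoulli: (1+x)^t ≤ 1 + t*x
  have hbern : (1 + x) ^ t ≤ 1 + t * x :=
    rpow_one_add_le_one_add_mul_self (by linarith) ht0 ht1
  -- 1 + t*x ≤ 1 + t*h*P/(t*sA+scov)
  have hstep : 1 + t * x ≤ 1 + t * h * P / (t * sA + scov) := by
    have : t * x ≤ t * h * P / (t * sA + scov) := by
      rw [hx, mul_div_assoc', div_le_div_iff₀ (by positivity) hden]
      nlinarith [mul_nonneg (mul_nonneg ht0 (mul_pos hh hP).le) (sub_nonneg.mpr ht1)]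
    linarith
  have hlog : t * Real.logb 2 (1 + x) = Real.logb 2 ((1 + x) ^ t) := by
    rw [Real.logb, Real.logb, Real.log_rpow (by linarith), mul_div_assoc]
  calc (1 - α) * Real.logb 2 (1 + h * P / (sA + scov))
      = Real.logb 2 ((1 + x) ^ t) := hlog
    _ ≤ Real.logb 2 (1 + t * x) := by
        exact Real.logb_le_logb_of_le (by norm_num) (by positivity) hbern
    _ ≤ Real.logb 2 (1 + (1 - α) * h * P / ((1 - α) * sA + scov)) := by
        apply Real.logb_le_logb_of_le (by norm_num) (by positivity)
        rw [← ht]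
        exact hstep
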